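/- Let p ∈ [1, ∞) and let u : ℂ → ℂ be entire (complex-differentiable at every point of ℂ). If ∫_ℂ |u(z)|^p dm(z) < ∞ (where dm is Lebesgue measure on ℂ ≅ ℝ²), then u is identically zero. -/

import Mathlib

open MeasureTheory

open Set Real

open scoped ENNReal


theorem lintegral_comp_polarCoord_symm' (f : ℝ × ℝ → ℝ≥0∞) :
    (∫⁻ p in polarCoord.target, ENNReal.ofReal p.1 * f (polarCoord.symm p)) = ∫⁻ p, f p := by
  set B : ℝ × ℝ → ℝ × ℝ →L[ℝ] ℝ × ℝ := fun p =>
    LinearMap.toContinuousLinearMap (Matrix.toLin (Module.Basis.finTwoProd ℝ) (Module.Basis.finTwoProd ℝ)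
      !![Real.cos p.2, -p.1 * Real.sin p.2; Real.sin p.2, p.1 * Real.cos p.2])
  have A : ∀ p ∈ polarCoord.target, HasFDerivWithinAt polarCoord.symm (B p) polarCoord.target p :=
    fun p _ => (hasFDerivAt_polarCoord_symm p).hasFDerivWithinAt
  have B_det : ∀ p, (B p).det = p.1 := by
    intro p
    conv_rhs => rw [← one_mul p.1, ← cos_sq_add_sin_sq p.2]
    simp only [B, neg_mul, LinearMap.det_toContinuousLinearMap, LinearMap.det_toLin,
      Matrix.det_fin_two_of, sub_neg_eq_add]
    ring
  symm
  calc
    ∫⁻ p, f p = ∫⁻ p in polarCoord.source, f p := by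
      rw [← setLIntegral_univ]
      exact setLIntegral_congr polarCoord_source_ae_eq_univ.symm
    _ = ∫⁻ p in polarCoord.symm '' polarCoord.target, f p := by
      rw [polarCoord.symm_image_target_eq_source]
    _ = ∫⁻ p in polarCoord.target, ENNReal.ofReal |(B p).det| * f (polarCoord.symm p) := by
      exact lintegral_image_eq_lintegral_abs_det_fderiv_mul volume
        polarCoord.open_target.measurableSet A
        (polarCoord.symm.injOn) f
    _ = ∫⁻ p in polarCoord.target, ENNReal.ofReal p.1 * f (polarCoord.symm p) := by
      refine setLIntegral_congr_fun polarCoord.open_target.measurableSet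
        (fun p hp => ?_)
      rw [B_det, abs_of_pos hp.1]

theorem Complex.lintegral_comp_polarCoord_symm' (f : ℂ → ℝ≥0∞) :
    (∫⁻ p in polarCoord.target, ENNReal.ofReal p.1 * f (Complex.polarCoord.symm p)) =
      ∫⁻ z, f z := by
  rw [← (Complex.volume_preserving_equiv_real_prod.symm).lintegral_comp_emb
    Complex.measurableEquivRealProd.symm.measurableEmbedding, ← _root_.lintegral_comp_polarCoord_symm']
  rfl

open Complex in
theorem circleMVP {u : ℂ → ℂ} (hu : ∀ z : ℂ, DifferentiableAt ℂ u z) (c : ℂ) {r : ℝ}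
    (hr : 0 < r) :
    ∫ θ in (0:ℝ)..(2*π), u (circleMap c r θ) = (2 * π : ℝ) • u c := by
  have h := Complex.circleIntegral_sub_center_inv_smul_of_differentiable_on_off_countable
    hr (f := u) (c := c) (s := (∅ : Set ℂ)) Set.countable_empty
    ((fun z _ => (hu z).continuousAt.continuousWithinAt))
    (fun z _ => hu z)
  rw [circleIntegral] at h
  have h2 : ∀ θ : ℝ, deriv (circleMap c r) θ • (circleMap c r θ - c)⁻¹ • u (circleMap c r θ)
      = I • u (circleMap c r θ) := by
    intro θ
    rw [deriv_circleMap, circleMap_sub_center, smul_eq_mul, smul_eq_mul, smul_eq_mul]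
    have hne : circleMap 0 r θ ≠ 0 := by
      simpa using circleMap_ne_center (c := (0:ℂ)) hr.ne' (θ := θ)
    field_simp
  simp_rw [h2] at h
  rw [intervalIntegral.integral_smul] at h
  have hI : (I : ℂ) ≠ 0 := I_ne_zero
  have := congrArg (fun z => I⁻¹ * z) h
  simp only [smul_eq_mul] at this ⊢
  rw [← mul_assoc, inv_mul_cancel₀ hI, one_mul] at this
  rw [this, Complex.real_smul]
  push_cast
  field_simp

theorem circle_ineq {u : ℂ → ℂ} (hu : ∀ z : ℂ, DifferentiableAt ℂ u z) {p : ℝ} (hp : 1 ≤ p)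
    (c : ℂ) {r : ℝ} (hr : 0 < r) :
    2 * π * ‖u c‖ ^ p ≤ ∫ θ in Set.Ioc (0:ℝ) (2*π), ‖u (circleMap c r θ)‖ ^ p := by
  have h2π : (0:ℝ) < 2 * π := by positivity
  set μ : Measure ℝ := volume.restrict (Set.Ioc (0:ℝ) (2*π)) with hμ
  have hμuniv : μ Set.univ = ENNReal.ofReal (2*π) := by
    simp [hμ, Real.volume_Ioc]
  haveI : IsFiniteMeasure μ := ⟨by rw [hμuniv]; exact ENNReal.ofReal_lt_top⟩
  haveI : NeZero μ := ⟨by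
    intro h
    rw [← Measure.measure_univ_eq_zero] at h
    rw [hμuniv] at h
    exact absurd h (by positivity)⟩
  have hucont : Continuous u := by
    apply continuous_iff_continuousAt.mpr
    exact fun z => (hu z).continuousAt
  set f : ℝ → ℝ := fun θ => ‖u (circleMap c r θ)‖ with hf
  have hfc : Continuous f := (hucont.comp (continuous_circleMap c r)).norm
  have hfpc : Continuous fun θ => f θ ^ p := by
    apply hfc.rpow_const
    intro x; right; linarith
  have hfi : Integrable f μ := hfc.integrableOn_Ioc
  have hfpi : Integrable (fun θ => f θ ^ p) μ := hfpc.integrableOn_Ioc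
  -- step 1 : mean value bound
  have hmean : ‖u c‖ ≤ ⨍ θ, f θ ∂μ := by
    have hMVP := circleMVP hu c hr
    have hbound : 2 * π * ‖u c‖ ≤ ∫ θ in (0:ℝ)..(2*π), f θ := by
      calc 2 * π * ‖u c‖ = ‖(2 * π : ℝ) • u c‖ := by
            rw [norm_smul, Real.norm_eq_abs, abs_of_pos h2π]
        _ = ‖∫ θ in (0:ℝ)..(2*π), u (circleMap c r θ)‖ := by rw [hMVP]
        _ ≤ ∫ θ in (0:ℝ)..(2*π), f θ :=
            intervalIntegral.norm_integral_le_integral_norm h2π.le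
    rw [average_eq, measureReal_def, hμuniv, ENNReal.toReal_ofReal h2π.le]
    rw [hμ, ← intervalIntegral.integral_of_le h2π.le, smul_eq_mul,
      inv_mul_eq_div, le_div_iff₀ h2π]
    linarith [hbound]
  -- step 2 : Jensen
  have hjen : (⨍ θ, f θ ∂μ) ^ p ≤ ⨍ θ, f θ ^ p ∂μ := by
    refine (convexOn_rpow hp).map_average_le ?_ isClosed_Ici ?_ hfi hfpi
    · intro x hx
      exact (Real.continuousAt_rpow_const x p (Or.inr (by linarith))).continuousWithinAt
    · exact Filter.Eventually.of_forall fun θ => norm_nonneg _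
  have hrw : ‖u c‖ ^ p ≤ ⨍ θ, f θ ^ p ∂μ :=
    le_trans (Real.rpow_le_rpow (norm_nonneg _) hmean (by linarith)) hjen
  rw [average_eq, measureReal_def, hμuniv, ENNReal.toReal_ofReal h2π.le, smul_eq_mul] at hrw
  calc 2 * π * ‖u c‖ ^ p ≤ 2 * π * ((2*π)⁻¹ * ∫ θ, f θ ^ p ∂μ) := by
        apply mul_le_mul_of_nonneg_left hrw h2π.le
    _ = ∫ θ, f θ ^ p ∂μ := by field_simp
    _ = ∫ θ in Set.Ioc (0:ℝ) (2*π), ‖u (circleMap c r θ)‖ ^ p := rfl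

theorem circleMap_eq_polar (c : ℂ) (r θ : ℝ) :
    circleMap c r θ = c + Complex.polarCoord.symm (r, θ) := by
  simp [circleMap, Complex.exp_mul_I, ← Complex.ofReal_cos, ← Complex.ofReal_sin]

/-- An entire function belonging to `L^p(ℂ)` for some `p ∈ [1, ∞)` vanishes
identically. -/
theorem statement13 (p : ℝ) (hp : 1 ≤ p) (u : ℂ → ℂ)
    (hu : ∀ z : ℂ, DifferentiableAt ℂ u z)
    (hint : Integrable (fun z : ℂ => ‖u z‖ ^ p) volume) :
    ∀ z : ℂ, u z = 0 := by
  intro c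
  by_contra hc
  have hucont : Continuous u := by
    apply continuous_iff_continuousAt.mpr
    exact fun z => (hu z).continuousAt
  have hπ : (0:ℝ) < π := Real.pi_pos
  set g : ℂ → ℝ≥0∞ := fun z => ENNReal.ofReal (‖u z‖ ^ p) with hg
  have hgpcont : Continuous fun z : ℂ => ‖u z‖ ^ p := by
    apply hucont.norm.rpow_const
    intro x; right; linarith
  have hgmeas : Measurable g := ENNReal.measurable_ofReal.comp hgpcont.measurable
  have hM : ∫⁻ z, g z < ⊤ := by
    have := hint.lintegral_lt_top
    simpa [hg] using this
  set C : ℝ≥0∞ := ENNReal.ofReal (2 * π * ‖u c‖ ^ p) with hC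
  have hCpos : C ≠ 0 := by
    rw [hC]
    have h1 : (0:ℝ) < ‖u c‖ ^ p := Real.rpow_pos_of_pos (norm_pos_iff.mpr hc) p
    simp only [ne_eq, ENNReal.ofReal_eq_zero, not_le]
    positivity
  -- key inequality for every r > 0
  have hkey : ∀ r : ℝ, 0 < r →
      C ≤ ∫⁻ θ in Set.Ioo (-π) π, g (c + Complex.polarCoord.symm (r, θ)) := by
    intro r hr
    have hcirc := circle_ineq hu hp c hr
    have hper : Function.Periodic (fun θ : ℝ => ‖u (circleMap c r θ)‖ ^ p) (2*π) := by
      intro θ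
      simp [periodic_circleMap c r θ]
    have hIoo : ∫ θ in Set.Ioc (0:ℝ) (2*π), ‖u (circleMap c r θ)‖ ^ p
        = ∫ θ in Set.Ioo (-π) π, ‖u (circleMap c r θ)‖ ^ p := by
      rw [← intervalIntegral.integral_of_le (by positivity), ← MeasureTheory.integral_Ioc_eq_integral_Ioo,
        ← intervalIntegral.integral_of_le (by linarith)]
      have := hper.intervalIntegral_add_eq (-π) 0
      simpa [show -π + 2*π = π by ring] using this.symm
    rw [hIoo] at hcirc
    have hcont2 : Continuous fun θ : ℝ => ‖u (circleMap c r θ)‖ ^ p := by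
      apply (hucont.comp (continuous_circleMap c r)).norm.rpow_const
      intro x; right; linarith
    calc C ≤ ENNReal.ofReal (∫ θ in Set.Ioo (-π) π, ‖u (circleMap c r θ)‖ ^ p) :=
          ENNReal.ofReal_le_ofReal hcirc
      _ = ∫⁻ θ in Set.Ioo (-π) π, ENNReal.ofReal (‖u (circleMap c r θ)‖ ^ p) := by
          refine ofReal_integral_eq_lintegral_ofReal
            (hcont2.integrableOn_Icc.mono_set Set.Ioo_subset_Icc_self) ?_
          refine Filter.Eventually.of_forall fun θ => ?_
          positivity
      _ = ∫⁻ θ in Set.Ioo (-π) π, g (c + Complex.polarCoord.symm (r, θ)) := by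
          simp_rw [← circleMap_eq_polar]
          rfl
  -- polar coordinates
  have hsymmc : Continuous fun q : ℝ × ℝ => c + (Complex.polarCoord.symm q : ℂ) := by
    simp only [Complex.polarCoord_symm_apply]
    fun_prop
  have hF : Measurable fun q : ℝ × ℝ =>
      ENNReal.ofReal q.1 * g (c + Complex.polarCoord.symm q) :=
    (ENNReal.measurable_ofReal.comp measurable_fst).mul (hgmeas.comp hsymmc.measurable)
  have hpolar : (∫⁻ q in polarCoord.target,
      ENNReal.ofReal q.1 * g (c + Complex.polarCoord.symm q)) = ∫⁻ z, g z := by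
    rw [Complex.lintegral_comp_polarCoord_symm' (fun z => g (c + z))]
    exact (measurePreserving_add_left volume c).lintegral_comp hgmeas
  have htarget : polarCoord.target = Set.Ioi (0:ℝ) ×ˢ Set.Ioo (-π) π := rfl
  have hfub : (∫⁻ q in polarCoord.target,
      ENNReal.ofReal q.1 * g (c + Complex.polarCoord.symm q))
      = ∫⁻ r in Set.Ioi (0:ℝ), ∫⁻ θ in Set.Ioo (-π) π,
          ENNReal.ofReal r * g (c + Complex.polarCoord.symm (r, θ)) := by
    rw [htarget, Measure.volume_eq_prod, ← Measure.prod_restrict,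
      lintegral_prod _ hF.aemeasurable]
  -- lower bound the iterated integral
  have hlow : (∫⁻ r in Set.Ioi (0:ℝ), ENNReal.ofReal r * C)
      ≤ ∫⁻ r in Set.Ioi (0:ℝ), ∫⁻ θ in Set.Ioo (-π) π,
          ENNReal.ofReal r * g (c + Complex.polarCoord.symm (r, θ)) := by
    refine setLIntegral_mono' measurableSet_Ioi fun r hr => ?_
    rw [lintegral_const_mul' _ _ ENNReal.ofReal_ne_top]
    exact mul_le_mul_right (hkey r hr) _
  have htop : (∫⁻ r in Set.Ioi (0:ℝ), ENNReal.ofReal r * C) = ⊤ := by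
    rw [eq_top_iff]
    calc (⊤ : ℝ≥0∞) = C * volume (Set.Ioi (1:ℝ)) := by
          rw [Real.volume_Ioi, ENNReal.mul_top hCpos]
      _ = ∫⁻ _ in Set.Ioi (1:ℝ), C := (setLIntegral_const _ _).symm
      _ ≤ ∫⁻ r in Set.Ioi (1:ℝ), ENNReal.ofReal r * C := by
          refine setLIntegral_mono' measurableSet_Ioi fun r hr => ?_
          conv_lhs => rw [← one_mul C]
          exact mul_le_mul_left (by simpa using ENNReal.one_le_ofReal.mpr (le_of_lt hr)) _
      _ ≤ ∫⁻ r in Set.Ioi (0:ℝ), ENNReal.ofReal r * C :=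
          lintegral_mono_set (Set.Ioi_subset_Ioi zero_le_one)
  have : (⊤ : ℝ≥0∞) ≤ ∫⁻ z, g z := by
    rw [← hpolar, hfub]
    exact htop ▸ hlow
  exact absurd (lt_of_le_of_lt this hM) (lt_irrefl _)
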